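/- Let 1 ≤ k < n and let λ = (λ_1, …, λ_n) ∈ Γ_k with λ_1 ≥ λ_2 ≥ … ≥ λ_n. Then λ_k > 0 and |λ_n| ≤ (n − k)·λ_k, with strict inequality when λ_n < 0. -/

import Mathlib

noncomputable def esymm (n m : ℕ) (lam : Fin n → ℝ) : ℝ :=
  ∑ s ∈ (Finset.univ : Finset (Fin n)).powersetCard m, ∏ i ∈ s, lam i

def GardingCone (n k : ℕ) : Set (Fin n → ℝ) :=
  {lam | ∀ j, 1 ≤ j → j ≤ k → 0 < esymm n j lam}

open Finset Polynomial

namespace Stmt0Aux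

variable {ι : Type*} [DecidableEq ι]

/-- Elementary symmetric sum of `f` over subsets of `s` of size `m`. -/
noncomputable def Es (f : ι → ℝ) (s : Finset ι) (m : ℕ) : ℝ :=
  ∑ t ∈ s.powersetCard m, ∏ i ∈ t, f i

lemma Es_zero (f : ι → ℝ) (s : Finset ι) : Es f s 0 = 1 := by
  simp [Es, Finset.powersetCard_zero]

lemma Es_eq_zero {f : ι → ℝ} {s : Finset ι} {m : ℕ} (h : s.card < m) : Es f s m = 0 := by
  simp [Es, Finset.powersetCard_eq_empty.mpr h]

lemma Es_insert {f : ι → ℝ} {s : Finset ι} {x : ι} (hx : x ∉ s) (m : ℕ) :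
    Es f (insert x s) (m + 1) = Es f s (m + 1) + f x * Es f s m := by
  classical
  rw [Es, Finset.powersetCard_succ_insert hx]
  rw [Finset.sum_union]
  · congr 1
    rw [Finset.sum_image]
    · rw [Es, Finset.mul_sum]
      refine Finset.sum_congr rfl fun t ht => ?_
      have hxt : x ∉ t := fun hmem =>
        hx ((Finset.mem_powersetCard.mp ht).1 hmem)
      rw [Finset.prod_insert hxt]
    · intro t ht t' ht' h
      have hxt : x ∉ t := fun hmem => hx ((Finset.mem_powersetCard.mp ht).1 hmem)
      have hxt' : x ∉ t' := fun hmem => hx ((Finset.mem_powersetCard.mp ht').1 hmem)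
      have := congrArg (fun u => Finset.erase u x) h
      simpa [Finset.erase_insert hxt, Finset.erase_insert hxt'] using this
  · rw [Finset.disjoint_left]
    intro t ht ht'
    obtain ⟨u, hu, rfl⟩ := Finset.mem_image.mp ht'
    have hxt : x ∈ insert x u := Finset.mem_insert_self x u
    have := (Finset.mem_powersetCard.mp ht).1 hxt
    exact hx this

lemma Es_insert' {f : ι → ℝ} {s : Finset ι} {x : ι} (hx : x ∉ s) {m : ℕ} (hm : 1 ≤ m) :
    Es f (insert x s) m = Es f s m + f x * Es f s (m - 1) := by
  obtain ⟨j, rfl⟩ : ∃ j, m = j + 1 := ⟨m - 1, by omega⟩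
  simpa using Es_insert hx j

lemma Es_nonneg {f : ι → ℝ} {s : Finset ι} {m : ℕ} (hf : ∀ i ∈ s, 0 ≤ f i) :
    0 ≤ Es f s m := by
  refine Finset.sum_nonneg fun t ht => Finset.prod_nonneg fun i hi => ?_
  exact hf i ((Finset.mem_powersetCard.mp ht).1 hi)

lemma Es_pos {f : ι → ℝ} {s : Finset ι} {m : ℕ} (hf : ∀ i ∈ s, 0 < f i)
    (hm : m ≤ s.card) : 0 < Es f s m := by
  refine Finset.sum_pos (fun t ht => Finset.prod_pos fun i hi => ?_) ?_
  · exact hf i ((Finset.mem_powersetCard.mp ht).1 hi)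
  · exact Finset.powersetCard_nonempty.mpr hm

lemma Es_top (f : ι → ℝ) (s : Finset ι) : Es f s s.card = ∏ i ∈ s, f i := by
  rw [Es, Finset.powersetCard_self, Finset.sum_singleton]

/-! ### Newton-type inequality -/

lemma mesymm_zero (s : Multiset ℝ) : s.esymm 0 = 1 := by
  simp [Multiset.esymm, Multiset.powersetCard_zero_left]

lemma mesymm_eq_zero {s : Multiset ℝ} {j : ℕ} (h : Multiset.card s < j) : s.esymm j = 0 := by
  simp [Multiset.esymm, Multiset.powersetCard_eq_empty _ h]

lemma mesymm_cons (a : ℝ) (s : Multiset ℝ) (j : ℕ) :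
    (a ::ₘ s).esymm (j + 1) = s.esymm (j + 1) + a * s.esymm j := by
  rw [Multiset.esymm, Multiset.powersetCard_cons, Multiset.map_add, Multiset.sum_add,
    Multiset.map_map]
  congr 1
  have : ((s.powersetCard j).map fun t => (a ::ₘ t).prod).sum
      = ((s.powersetCard j).map fun t => a * t.prod).sum := by
    congr 1
    exact Multiset.map_congr rfl fun t _ => by rw [Multiset.prod_cons]
  rw [Function.comp_def, this, Multiset.sum_map_mul_left]
  rfl

/-- Top-degree Newton inequality for an arbitrary real multiset. -/
lemma newton_top : ∀ (m : ℕ) (s : Multiset ℝ), Multiset.card s = m + 2 →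
    2 * s.esymm (m + 2) * s.esymm m ≤ s.esymm (m + 1) ^ 2 := by
  intro m
  induction m with
  | zero =>
    intro s hs
    obtain ⟨a, b, rfl⟩ := Multiset.card_eq_two.mp hs
    have z1 : (0 : Multiset ℝ).esymm 1 = 0 := mesymm_eq_zero (by simp)
    have hb1 : ({b} : Multiset ℝ).esymm 1 = b := by
      have h := mesymm_cons b 0 0
      rw [mesymm_zero] at h
      simpa [z1] using h
    have hb2 : ({b} : Multiset ℝ).esymm 2 = 0 := mesymm_eq_zero (by simp)
    have e1 : ({a, b} : Multiset ℝ).esymm 1 = a + b := by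
      have h := mesymm_cons a {b} 0
      rw [mesymm_zero] at h
      simpa [Multiset.insert_eq_cons, hb1, add_comm] using h
    have e2 : ({a, b} : Multiset ℝ).esymm 2 = a * b := by
      have h := mesymm_cons a {b} 1
      rw [show (1 : ℕ) + 1 = 2 from rfl] at h
      simpa [Multiset.insert_eq_cons, hb1, hb2] using h
    rw [e1, e2, mesymm_zero]
    nlinarith [sq_nonneg (a - b)]
  | succ m ih =>
    intro s hs
    have hne : s ≠ 0 := by
      intro h; rw [h] at hs; simp at hs
    obtain ⟨a, ha⟩ := Multiset.exists_mem_of_ne_zero hne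
    obtain ⟨t, rfl⟩ := Multiset.exists_cons_of_mem ha
    have hct : Multiset.card t = m + 2 := by
      have := hs; rw [Multiset.card_cons] at this; omega
    have IH := ih t hct
    have eK : (a ::ₘ t).esymm (m + 1 + 2) = a * t.esymm (m + 2) := by
      rw [show m + 1 + 2 = (m + 2) + 1 from rfl, mesymm_cons,
        mesymm_eq_zero (by omega)]
      ring
    have eK1 : (a ::ₘ t).esymm (m + 1 + 1) = t.esymm (m + 2) + a * t.esymm (m + 1) := by
      rw [show m + 1 + 1 = (m + 1) + 1 from rfl, mesymm_cons]
    have eK2 : (a ::ₘ t).esymm (m + 1) = t.esymm (m + 1) + a * t.esymm m := by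
      rw [show m + 1 = m + 1 from rfl, mesymm_cons]
    rw [eK, eK1, eK2]
    nlinarith [sq_nonneg (t.esymm (m + 2)),
      mul_le_mul_of_nonneg_left IH (sq_nonneg a)]

lemma card_roots_iterate (p : Polynomial ℝ) (h : Multiset.card p.roots = p.natDegree) :
    ∀ r : ℕ, p.natDegree - r ≤ Multiset.card ((derivative^[r]) p).roots := by
  intro r
  induction r with
  | zero => simp [h]
  | succ r ihr =>
    rw [Function.iterate_succ_apply']
    have := Polynomial.card_roots_le_derivative ((derivative^[r]) p)
    omega

/-- Mid-degree Newton inequality. -/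
lemma newton_mid (f : ι → ℝ) (s : Finset ι) (k : ℕ) (hk2 : 2 ≤ k) (hks : k ≤ s.card)
    (h0 : 0 ≤ Es f s k * Es f s (k - 2)) :
    Es f s k * Es f s (k - 2) ≤ Es f s (k - 1) ^ 2 := by
  classical
  set P : Polynomial ℝ := ∏ i ∈ s, (X + C (f i)) with hP
  have hmono : ∀ i ∈ s, (X + C (f i)).Monic := fun i _ => monic_X_add_C (f i)
  have hPmonic : P.Monic := monic_prod_of_monic _ _ hmono
  have hdeg : P.natDegree = s.card := by
    rw [hP, natDegree_prod_of_monic _ _ hmono]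
    simp [natDegree_X_add_C]
  have hsplit : P.Splits := by
    refine Splits.prod fun i _ => ?_
    exact Splits.X_add_C (f i)
  have hroots : Multiset.card P.roots = P.natDegree :=
    (Polynomial.splits_iff_card_roots).mp hsplit
  set r : ℕ := s.card - k with hr
  set q : Polynomial ℝ := (derivative^[r]) P with hq
  have hcoe : ∀ j, j ≤ k → q.coeff j = ((j + r).descFactorial r : ℝ) * Es f s (k - j) := by
    intro j hj
    rw [hq, Polynomial.coeff_iterate_derivative, nsmul_eq_mul]
    congr 1
    have h1 : j + r ≤ s.card := by omega
    rw [hP, Finset.prod_X_add_C_coeff s f h1]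
    have h2 : s.card - (j + r) = k - j := by omega
    rw [h2]
    rfl
  have hck : q.coeff k = ((k + r).descFactorial r : ℝ) := by
    rw [hcoe k le_rfl, Nat.sub_self, Es_zero, mul_one]
  have hdfk : (k + r).descFactorial r ≠ 0 := by
    rw [Ne, Nat.descFactorial_eq_zero_iff_lt]; omega
  have hq0 : q ≠ 0 := by
    intro h
    rw [h, Polynomial.coeff_zero] at hck
    exact hdfk (by exact_mod_cast hck.symm)
  have hqdeg : q.natDegree = k := by
    refine le_antisymm (natDegree_le_iff_coeff_eq_zero.mpr fun N hN => ?_)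
      (le_natDegree_of_ne_zero (by rw [hck]; exact_mod_cast hdfk))
    rw [hq, Polynomial.coeff_iterate_derivative,
      Polynomial.coeff_eq_zero_of_natDegree_lt (by rw [hdeg]; omega), smul_zero]
  have hqroots : Multiset.card q.roots = k := by
    have hub := q.card_roots'
    have hlb := card_roots_iterate P hroots r
    rw [← hq] at hlb
    omega
  have hvieta : ∀ j, j ≤ k →
      q.coeff j = q.leadingCoeff * (-1) ^ (k - j) * q.roots.esymm (k - j) := by
    intro j hj
    have := Polynomial.coeff_eq_esymm_roots_of_card
      (p := q) (by rw [hqroots, hqdeg]) (k := j) (by rw [hqdeg]; exact hj)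
    rwa [hqdeg] at this
  set c : ℝ := q.leadingCoeff with hc
  set A : ℝ := Es f s k
  set B : ℝ := Es f s (k - 1)
  set Cc : ℝ := Es f s (k - 2)
  set R0 : ℝ := q.roots.esymm k
  set R1 : ℝ := q.roots.esymm (k - 1)
  set R2 : ℝ := q.roots.esymm (k - 2)
  have eq0 : ((0 + r).descFactorial r : ℝ) * A = c * (-1) ^ k * R0 := by
    have h1 := hcoe 0 (by omega)
    have h2 := hvieta 0 (by omega)
    rw [Nat.sub_zero] at h1 h2
    rw [← h1, h2]
  have eq1 : ((1 + r).descFactorial r : ℝ) * B = c * (-1) ^ (k - 1) * R1 := by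
    have h1 := hcoe 1 (by omega)
    have h2 := hvieta 1 (by omega)
    rw [← h1, h2]
  have eq2 : ((2 + r).descFactorial r : ℝ) * Cc = c * (-1) ^ (k - 2) * R2 := by
    have h1 := hcoe 2 hk2
    have h2 := hvieta 2 hk2
    rw [← h1, h2]
  -- descFactorial values
  have d0 : (0 + r).descFactorial r = r.factorial := by
    rw [Nat.zero_add, Nat.descFactorial_self]
  have d1 : (1 + r).descFactorial r = (r + 1).factorial := by
    have h1 := Nat.descFactorial_self (r + 1)
    rw [Nat.descFactorial_succ] at h1
    have h2 : r + 1 - r = 1 := by omega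
    rw [h2, Nat.one_mul] at h1
    rw [Nat.add_comm 1 r]
    exact h1
  have d2 : 2 * ((2 + r).descFactorial r) = (r + 2).factorial := by
    have h1 := Nat.descFactorial_self (r + 2)
    rw [Nat.descFactorial_succ] at h1
    rw [Nat.descFactorial_succ] at h1
    have h2 : r + 2 - (r + 1) = 1 := by omega
    have h3 : r + 2 - r = 2 := by omega
    rw [h2, h3, Nat.one_mul] at h1
    rw [Nat.add_comm 2 r]
    exact h1
  -- Newton for the roots of q
  have hnewt : 2 * R0 * R2 ≤ R1 ^ 2 := by
    have := newton_top (k - 2) q.roots (by omega)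
    have h1 : k - 2 + 2 = k := by omega
    have h2 : k - 2 + 1 = k - 1 := by omega
    rwa [h1, h2] at this
  -- signs
  have hsq : ((-1 : ℝ) ^ (k - 1)) ^ 2 = 1 := by
    rw [← pow_mul, mul_comm, pow_mul, neg_one_sq, one_pow]
  have hsgn : ((-1 : ℝ) ^ k) * ((-1 : ℝ) ^ (k - 2)) = 1 := by
    rw [← pow_add]
    have : k + (k - 2) = 2 * (k - 1) := by omega
    rw [this, pow_mul, neg_one_sq, one_pow]
  -- combine
  have hB2 : ((r + 1).factorial : ℝ) ^ 2 * B ^ 2 = c ^ 2 * R1 ^ 2 := by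
    have h := eq1
    rw [d1] at h
    calc ((r + 1).factorial : ℝ) ^ 2 * B ^ 2
        = (((r + 1).factorial : ℝ) * B) ^ 2 := by ring
      _ = (c * (-1) ^ (k - 1) * R1) ^ 2 := by rw [h]
      _ = c ^ 2 * R1 ^ 2 * ((-1 : ℝ) ^ (k - 1)) ^ 2 := by ring
      _ = c ^ 2 * R1 ^ 2 := by rw [hsq, mul_one]
  have hAC : (r.factorial : ℝ) * ((2 + r).descFactorial r : ℝ) * (A * Cc)
      = c ^ 2 * (R0 * R2) := by
    have h0' := eq0
    rw [d0] at h0'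
    calc (r.factorial : ℝ) * ((2 + r).descFactorial r : ℝ) * (A * Cc)
        = ((r.factorial : ℝ) * A) * (((2 + r).descFactorial r : ℝ) * Cc) := by ring
      _ = (c * (-1) ^ k * R0) * (c * (-1) ^ (k - 2) * R2) := by rw [h0', eq2]
      _ = c ^ 2 * (R0 * R2) * (((-1 : ℝ) ^ k) * ((-1 : ℝ) ^ (k - 2))) := by ring
      _ = c ^ 2 * (R0 * R2) := by rw [hsgn, mul_one]
  -- numeric comparison of factorial constants
  have hfacts : ((r + 1).factorial : ℝ) ^ 2
      ≤ 2 * ((r.factorial : ℝ) * ((2 + r).descFactorial r : ℝ)) := by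
    have h2 : (2 : ℝ) * ((2 + r).descFactorial r : ℝ) = ((r + 2).factorial : ℝ) := by
      exact_mod_cast congrArg (fun x : ℕ => (x : ℝ)) d2
    have hf1 : ((r + 1).factorial : ℝ) = ((r : ℝ) + 1) * (r.factorial : ℝ) := by
      rw [Nat.factorial_succ]; push_cast; ring
    have hf2 : ((r + 2).factorial : ℝ)
        = ((r : ℝ) + 2) * (((r : ℝ) + 1) * (r.factorial : ℝ)) := by
      rw [show r + 2 = (r + 1) + 1 from rfl, Nat.factorial_succ, Nat.factorial_succ]
      push_cast; ring
    have hrf : (0 : ℝ) < (r.factorial : ℝ) := by exact_mod_cast Nat.factorial_pos r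
    have hstep : 2 * ((r.factorial : ℝ) * ((2 + r).descFactorial r : ℝ))
        = (r.factorial : ℝ) * ((r + 2).factorial : ℝ) := by
      rw [← h2]; ring
    rw [hstep, hf1, hf2]
    have hr0 : (0 : ℝ) ≤ (r : ℝ) := Nat.cast_nonneg r
    nlinarith [hrf, mul_pos hrf hrf, hr0]
  have hkey : 2 * ((r.factorial : ℝ) * ((2 + r).descFactorial r : ℝ)) * (A * Cc)
      ≤ ((r + 1).factorial : ℝ) ^ 2 * B ^ 2 := by
    rw [hB2]
    have : 2 * (c ^ 2 * (R0 * R2)) ≤ c ^ 2 * R1 ^ 2 := by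
      nlinarith [mul_le_mul_of_nonneg_left hnewt (sq_nonneg c)]
    calc 2 * ((r.factorial : ℝ) * ((2 + r).descFactorial r : ℝ)) * (A * Cc)
        = 2 * (c ^ 2 * (R0 * R2)) := by rw [← hAC]; ring
      _ ≤ c ^ 2 * R1 ^ 2 := this
  have hF1pos : (0 : ℝ) < ((r + 1).factorial : ℝ) ^ 2 := by
    have : (0 : ℕ) < (r + 1).factorial := Nat.factorial_pos _
    positivity
  have h1 : ((r + 1).factorial : ℝ) ^ 2 * (A * Cc)
      ≤ 2 * ((r.factorial : ℝ) * ((2 + r).descFactorial r : ℝ)) * (A * Cc) :=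
    mul_le_mul_of_nonneg_right hfacts h0
  have h2 : ((r + 1).factorial : ℝ) ^ 2 * (A * Cc) ≤ ((r + 1).factorial : ℝ) ^ 2 * B ^ 2 :=
    le_trans h1 hkey
  exact le_of_mul_le_mul_left h2 hF1pos

/-! ### Prefix sets -/

def Pref (n m : ℕ) : Finset (Fin n) := Finset.univ.filter fun i => (i : ℕ) < m

lemma mem_Pref {n m : ℕ} {i : Fin n} : i ∈ Pref n m ↔ (i : ℕ) < m := by
  simp [Pref]

lemma Pref_top (n : ℕ) : Pref n n = Finset.univ := by
  ext i; simp [Pref, i.isLt]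

lemma Pref_succ {n m : ℕ} (h : m < n) :
    Pref n (m + 1) = insert ⟨m, h⟩ (Pref n m) := by
  ext i
  simp only [mem_Pref, Finset.mem_insert, Fin.ext_iff]
  omega

lemma not_mem_Pref {n m : ℕ} (h : m < n) : (⟨m, h⟩ : Fin n) ∉ Pref n m := by
  simp [mem_Pref]

lemma Pref_zero (n : ℕ) : Pref n 0 = ∅ := by
  ext i; simp [mem_Pref]

lemma card_Pref {n : ℕ} : ∀ {m : ℕ}, m ≤ n → (Pref n m).card = m := by
  intro m
  induction m with
  | zero => intro _; simp [Pref_zero]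
  | succ m ihm =>
    intro hm
    have hmn : m < n := by omega
    rw [Pref_succ hmn, Finset.card_insert_of_notMem (not_mem_Pref hmn), ihm (by omega)]

lemma Pref_mono {n m m' : ℕ} (h : m ≤ m') : Pref n m ⊆ Pref n m' := by
  intro i hi
  rw [mem_Pref] at hi ⊢
  omega

end Stmt0Aux

open Stmt0Aux

set_option maxHeartbeats 1000000 in
/-- Let `1 ≤ k < n` and `λ ∈ Γ_k` with `λ_1 ≥ … ≥ λ_n`.
Then `λ_k > 0` and `|λ_n| ≤ (n-k)·λ_k`, strictly if `λ_n < 0`. -/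
theorem stmt0 (n k : ℕ) (hk1 : 1 ≤ k) (hkn : k < n)
    (lam : Fin n → ℝ) (hGamma : lam ∈ GardingCone n k)
    (hsort : ∀ i j : Fin n, i ≤ j → lam j ≤ lam i) :
    0 < lam ⟨k - 1, by omega⟩ ∧
    |lam ⟨n - 1, by omega⟩| ≤ ((n : ℝ) - (k : ℝ)) * lam ⟨k - 1, by omega⟩ ∧
    (lam ⟨n - 1, by omega⟩ < 0 →
      |lam ⟨n - 1, by omega⟩| < ((n : ℝ) - (k : ℝ)) * lam ⟨k - 1, by omega⟩) := by
  classical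
  set aK : Fin n := ⟨k - 1, by omega⟩ with haK
  set aN : Fin n := ⟨n - 1, by omega⟩ with haN
  -- positivity of all esymm of the full vector up to level k
  have hpos_univ : ∀ j, j ≤ k → 0 < Es lam (Finset.univ : Finset (Fin n)) j := by
    intro j hj
    rcases Nat.eq_zero_or_pos j with h0 | h1
    · rw [h0, Es_zero]; norm_num
    · exact hGamma j h1 hj
  -- all prefixes of length ≥ k-1 have positive esymm up to level k
  have hL1 : ∀ d m, m + d = n → k ≤ m → ∀ j, j ≤ k → 0 < Es lam (Pref n m) j := by
    intro d
    induction d with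
    | zero =>
      intro m hm _ j hj
      have : m = n := by omega
      rw [this, Pref_top]
      exact hpos_univ j hj
    | succ d ihd =>
      intro m hm hkm j hj
      have hmn : m < n := by omega
      have hnext : ∀ j, j ≤ k → 0 < Es lam (Pref n (m + 1)) j :=
        ihd (m + 1) (by omega) (by omega)
      set a : Fin n := ⟨m, hmn⟩ with ha
      have hins : Pref n (m + 1) = insert a (Pref n m) := Pref_succ hmn
      rcases lt_or_ge 0 (lam a) with hla | hla
      · -- all entries of the prefix are positive
        refine Es_pos (fun i hi => ?_) ?_
        · have hi' : (i : ℕ) < m := mem_Pref.mp hi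
          have : lam a ≤ lam i := hsort i a (by rw [Fin.le_def]; exact hi'.le)
          linarith
        · rw [card_Pref hmn.le]; omega
      · -- the removed entry is ≤ 0
        have inner : ∀ j', j' ≤ k → 0 < Es lam (Pref n m) j' := by
          intro j'
          induction j' with
          | zero => intro _; rw [Es_zero]; norm_num
          | succ j' ihj =>
            intro hjk
            have h1 := hnext (j' + 1) hjk
            rw [hins, Es_insert (not_mem_Pref hmn)] at h1
            have h2 := ihj (by omega)
            nlinarith [mul_nonneg (neg_nonneg.mpr hla) h2.le]
        exact inner j hj
  -- λ_k > 0
  have hakpos : 0 < lam aK := by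
    by_contra hle
    push_neg at hle
    have hk1n : k - 1 < n := by omega
    have hins : Pref n k = insert aK (Pref n (k - 1)) := by
      have := Pref_succ hk1n
      rw [show k - 1 + 1 = k by omega] at this
      exact this
    have hPk : ∀ j, j ≤ k → 0 < Es lam (Pref n k) j :=
      hL1 (n - k) k (by omega) le_rfl
    have hnm : aK ∉ Pref n (k - 1) := by
      rw [mem_Pref]; simp [haK]
    have inner : ∀ j, j ≤ k → 0 < Es lam (Pref n (k - 1)) j := by
      intro j
      induction j with
      | zero => intro _; rw [Es_zero]; norm_num
      | succ j ihj =>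
        intro hjk
        have h1 := hPk (j + 1) hjk
        rw [hins, Es_insert hnm] at h1
        have h2 := ihj (by omega)
        nlinarith [mul_nonneg (neg_nonneg.mpr hle) h2.le]
    have hcon := inner k le_rfl
    rw [Es_eq_zero (by rw [card_Pref (by omega : k - 1 ≤ n)]; omega)] at hcon
    exact lt_irrefl 0 hcon
  -- chain inequality
  have hchain : ∀ m, k ≤ m → m ≤ n →
      Es lam (Pref n m) k ≤ ((m : ℝ) - k + 1) * lam aK * Es lam (Pref n m) (k - 1) := by
    intro m hkm
    induction m, hkm using Nat.le_induction with
    | base =>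
      intro _
      have hposk : ∀ i ∈ Pref n k, 0 < lam i := by
        intro i hi
        have hi' : (i : ℕ) < k := mem_Pref.mp hi
        have : lam aK ≤ lam i := hsort i aK (by rw [Fin.le_def]; simp [haK]; omega)
        linarith
      have hk1n : k - 1 < n := by omega
      have hins : Pref n k = insert aK (Pref n (k - 1)) := by
        have := Pref_succ hk1n
        rw [show k - 1 + 1 = k by omega] at this
        exact this
      have hnm : aK ∉ Pref n (k - 1) := by rw [mem_Pref]; simp [haK]
      have hcardk : (Pref n k).card = k := card_Pref (by omega)
      have hAk : Es lam (Pref n k) k = lam aK * ∏ i ∈ Pref n (k - 1), lam i := by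
        have h := Es_top lam (Pref n k)
        rw [hcardk] at h
        rw [h, hins, Finset.prod_insert hnm]
      have hBk : (∏ i ∈ Pref n (k - 1), lam i) ≤ Es lam (Pref n k) (k - 1) := by
        refine Finset.single_le_sum (f := fun t => ∏ i ∈ t, lam i) ?_ ?_
        · intro t ht
          exact Finset.prod_nonneg fun i hi =>
            (hposk i ((Finset.mem_powersetCard.mp ht).1 hi)).le
        · rw [Finset.mem_powersetCard]
          exact ⟨Pref_mono (by omega), card_Pref (by omega)⟩
      have : Es lam (Pref n k) k ≤ lam aK * Es lam (Pref n k) (k - 1) := by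
        rw [hAk]
        exact mul_le_mul_of_nonneg_left hBk hakpos.le
      calc Es lam (Pref n k) k ≤ lam aK * Es lam (Pref n k) (k - 1) := this
        _ = ((k : ℝ) - k + 1) * lam aK * Es lam (Pref n k) (k - 1) := by ring
    | succ m hkm IH =>
      intro hm1n
      have hmn : m < n := by omega
      have IH' := IH (by omega)
      set a : Fin n := ⟨m, hmn⟩ with ha
      have hins : Pref n (m + 1) = insert a (Pref n m) := Pref_succ hmn
      have hnm : a ∉ Pref n m := not_mem_Pref hmn
      have ha_le : lam a ≤ lam aK := hsort aK a (by rw [Fin.le_def]; simp [haK, ha]; omega)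
      have hcard : (Pref n m).card = m := card_Pref (by omega)
      set A : ℝ := Es lam (Pref n m) k
      set B : ℝ := Es lam (Pref n m) (k - 1)
      set A' : ℝ := Es lam (Pref n (m + 1)) k
      set B' : ℝ := Es lam (Pref n (m + 1)) (k - 1)
      have hApos : 0 < A := hL1 (n - m) m (by omega) hkm k le_rfl
      have hBpos : 0 < B := hL1 (n - m) m (by omega) hkm (k - 1) (by omega)
      have hA'pos : 0 < A' := hL1 (n - (m + 1)) (m + 1) (by omega) (by omega) k le_rfl
      have hB'pos : 0 < B' := hL1 (n - (m + 1)) (m + 1) (by omega) (by omega) (k - 1) (by omega)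
      have eA : A' = A + lam a * B := by
        rw [show A' = Es lam (Pref n (m + 1)) k from rfl, hins, Es_insert' hnm (by omega)]
      rcases eq_or_lt_of_le hk1 with hk1' | hk2
      · -- k = 1
        have hk : k = 1 := hk1'.symm
        subst hk
        have hB1 : B = 1 := by
          rw [show B = Es lam (Pref n m) 0 from rfl, Es_zero]
        have hB'1 : B' = 1 := by
          rw [show B' = Es lam (Pref n (m + 1)) 0 from rfl, Es_zero]
        rw [hB'1, mul_one]
        rw [eA, hB1, mul_one]
        rw [hB1, mul_one] at IH'
        push_cast at IH' ⊢
        nlinarith [hakpos, ha_le]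
      · -- k ≥ 2
        set Cm : ℝ := Es lam (Pref n m) (k - 2)
        have hCpos : 0 < Cm := hL1 (n - m) m (by omega) hkm (k - 2) (by omega)
        have eB : B' = B + lam a * Cm := by
          rw [show B' = Es lam (Pref n (m + 1)) (k - 1) from rfl, hins,
            Es_insert' hnm (by omega), show k - 1 - 1 = k - 2 by omega]
        have hnewt : A * Cm ≤ B ^ 2 := by
          have := newton_mid lam (Pref n m) k (by omega) (by rw [hcard]; omega)
            (le_of_lt (mul_pos hApos hCpos))
          exact this
        rcases le_or_gt 0 (lam a) with h0a | h0a
        · -- nonnegative new entry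
          have h1 : lam a * B ≤ lam aK * B := mul_le_mul_of_nonneg_right ha_le hBpos.le
          have h2 : A' ≤ ((m : ℝ) - k + 1) * lam aK * B + lam aK * B := by
            rw [eA]; exact add_le_add IH' h1
          have h3 : ((m : ℝ) - k + 1) * lam aK * B + lam aK * B
              = ((m : ℝ) - k + 2) * lam aK * B := by ring
          have hBle : B ≤ B' := by
            rw [eB]
            nlinarith [mul_nonneg h0a hCpos.le]
          have hcoef : (0 : ℝ) ≤ ((m : ℝ) - k + 2) * lam aK := by
            have : (k : ℝ) ≤ (m : ℝ) := by exact_mod_cast hkm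
            nlinarith [hakpos]
          have h4 : ((m : ℝ) - k + 2) * lam aK * B ≤ ((m : ℝ) - k + 2) * lam aK * B' :=
            mul_le_mul_of_nonneg_left hBle hcoef
          have h5 : A' ≤ ((m : ℝ) - k + 2) * lam aK * B' := by
            rw [h3] at h2; linarith
          have : ((m + 1 : ℕ) : ℝ) - k + 1 = (m : ℝ) - k + 2 := by push_cast; ring
          rw [this]; exact h5
        · -- negative new entry: use Newton
          have hkey : A' * B ≤ A * B' := by
            rw [eA, eB]
            have := mul_le_mul_of_nonpos_left hnewt h0a.le
            nlinarith [this]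
          have h1 : A * B' ≤ (((m : ℝ) - k + 1) * lam aK * B) * B' :=
            mul_le_mul_of_nonneg_right IH' hB'pos.le
          have h2 : A' * B ≤ (((m : ℝ) - k + 1) * lam aK * B') * B := by
            calc A' * B ≤ A * B' := hkey
              _ ≤ (((m : ℝ) - k + 1) * lam aK * B) * B' := h1
              _ = (((m : ℝ) - k + 1) * lam aK * B') * B := by ring
          have h3 : A' ≤ ((m : ℝ) - k + 1) * lam aK * B' :=
            le_of_mul_le_mul_right h2 hBpos
          have h4 : (0 : ℝ) ≤ lam aK * B' := mul_nonneg hakpos.le hB'pos.le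
          have : ((m + 1 : ℕ) : ℝ) - k + 1 = ((m : ℝ) - k + 1) + 1 := by push_cast; ring
          rw [this]
          nlinarith [h3, h4]
  -- final assembly
  have hn1n : n - 1 < n := by omega
  have hinsN : Finset.univ = insert aN (Pref n (n - 1)) := by
    have := Pref_succ hn1n
    rw [show n - 1 + 1 = n by omega, Pref_top] at this
    exact this
  have hnmN : aN ∉ Pref n (n - 1) := by rw [mem_Pref]; simp [haN]
  have hsplitN : Es lam (Finset.univ : Finset (Fin n)) k
      = Es lam (Pref n (n - 1)) k + lam aN * Es lam (Pref n (n - 1)) (k - 1) := by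
    rw [hinsN, Es_insert' hnmN (by omega)]
  have hAfin := hchain (n - 1) (by omega) (by omega)
  have hBfin : 0 < Es lam (Pref n (n - 1)) (k - 1) :=
    hL1 (n - (n - 1)) (n - 1) (by omega) (by omega) (k - 1) (by omega)
  have hGkpos : 0 < Es lam (Finset.univ : Finset (Fin n)) k := hpos_univ k le_rfl
  have hcast : ((n - 1 : ℕ) : ℝ) - k + 1 = (n : ℝ) - k := by
    have : (1 : ℕ) ≤ n := by omega
    push_cast [Nat.cast_sub this]
    ring
  rw [hcast] at hAfin
  have hfin : 0 < ((n : ℝ) - k) * lam aK + lam aN := by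
    by_contra hcon
    push_neg at hcon
    have h1 : Es lam (Pref n (n - 1)) k + lam aN * Es lam (Pref n (n - 1)) (k - 1)
        ≤ (((n : ℝ) - k) * lam aK + lam aN) * Es lam (Pref n (n - 1)) (k - 1) := by
      nlinarith [hAfin]
    have h2 : (((n : ℝ) - k) * lam aK + lam aN) * Es lam (Pref n (n - 1)) (k - 1) ≤ 0 :=
      mul_nonpos_of_nonpos_of_nonneg hcon hBfin.le
    rw [hsplitN] at hGkpos
    linarith
  have hnk1 : (1 : ℝ) ≤ (n : ℝ) - k := by
    have : (k : ℝ) + 1 ≤ (n : ℝ) := by exact_mod_cast hkn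
    linarith
  refine ⟨hakpos, ?_, ?_⟩
  · rcases le_or_gt 0 (lam aN) with hsgn | hsgn
    · rw [abs_of_nonneg hsgn]
      have hle : lam aN ≤ lam aK := hsort aK aN (by rw [Fin.le_def]; simp [haK, haN]; omega)
      nlinarith [hakpos]
    · rw [abs_of_neg hsgn]
      linarith
  · intro hneg
    rw [abs_of_neg hneg]
    linarith
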